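/- Fix real parameters 0 < α < 1, η ≥ 0, β > 0, r > 0, K > 0 and δ ∈ ℝ with α·r < δ < r + (1−α)·β. Set ρ := (δ−r)/(α−1) (so that ρ + β > 0 and ρ < r) and define M(t) := max(η, K^{1/(α−1)}·e^{(ρ+β)t}) for t ≥ 0, extended by M(t) := η for t < 0, and let μ_M denote the associated Lebesgue–Stieltjes measure on [0,∞). Then the discounted cost of the tracking consumption plan satisfies: (1/β)·∫_{[0,∞)} e^{−(r+β)t} dμ_M(t) = K^{1/(α−1)}·(1−α)(β+r)/(β(δ−αr)) − η/β if η ≤ K^{1/(α−1)}, and (1/β)·∫_{[0,∞)} e^{−(r+β)t} dμ_M(t) = ((1−α)β + r − δ)/(β(δ−αr)) · η^{(αr−δ)/((1−α)β+r−δ)} · K^{−(r+β)/((1−α)β+r−δ)} if η > K^{1/(α−1)}. -/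

import Mathlib

open MeasureTheory

open Set Filter Topology
open scoped NNReal ENNReal

theorem stmt13_aux (A γ lam T c : ℝ) (hA : 0 < A) (hγ : 0 < γ) (hlam : γ < lam)
    (hT : 0 ≤ T) (hc : 0 ≤ c) (f : StieltjesFunction ℝ)
    (h1 : ∀ t : ℝ, t < 0 → f t = A * Real.exp (γ * T) - c)
    (h2 : ∀ t : ℝ, 0 ≤ t → t < T → f t = A * Real.exp (γ * T))
    (h3 : ∀ t : ℝ, T ≤ t → f t = A * Real.exp (γ * t)) :
    ∫ t in Set.Ici (0:ℝ), Real.exp (-lam * t) ∂f.measure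
      = c + A * γ / (lam - γ) * Real.exp ((γ - lam) * T) := by
  set h : ℝ → ℝ := fun s => A * γ * Real.exp (γ * s) with hh
  have hh_cont : Continuous h := by fun_prop
  have hh_nn : ∀ s, 0 ≤ h s := fun s => by positivity
  have hd_meas : Measurable fun t => Real.toNNReal ((Set.Ioi T).indicator h t) :=
    (hh_cont.measurable.indicator measurableSet_Ioi).real_toNNReal
  set w : Measure ℝ :=
    volume.withDensity (fun t => ((Real.toNNReal ((Set.Ioi T).indicator h t) : ℝ≥0) : ℝ≥0∞))
    with hw
  have hdens_eq : (fun t => ((Real.toNNReal ((Set.Ioi T).indicator h t) : ℝ≥0) : ℝ≥0∞))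
      = (Set.Ioi T).indicator fun t => ENNReal.ofReal (h t) := by
    funext t
    by_cases ht : t ∈ Set.Ioi T
    · simp [Set.indicator_of_mem ht, ENNReal.ofReal]
    · simp [Set.indicator_of_notMem ht]
  -- FTC on finite intervals
  have hFTC : ∀ a b : ℝ, a ≤ b →
      ∫ t in a..b, h t = A * Real.exp (γ * b) - A * Real.exp (γ * a) := by
    intro a b _
    have : ∀ x ∈ Set.uIcc a b, HasDerivAt (fun t => A * Real.exp (γ * t)) (h x) x := by
      intro x _
      have h1' : HasDerivAt (fun t : ℝ => γ * t) γ x := by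
        simpa using (hasDerivAt_id x).const_mul γ
      have h2' := h1'.exp
      have h3' := h2'.const_mul A
      refine h3'.congr_deriv ?_
      show _ = A * γ * Real.exp (γ * x); ring
    rw [intervalIntegral.integral_eq_sub_of_hasDerivAt this
      (hh_cont.intervalIntegrable a b)]
  have hWioc : ∀ a b : ℝ, a ≤ b → w (Set.Ioc a b)
      = ENNReal.ofReal (A * Real.exp (γ * max T b) - A * Real.exp (γ * max T a)) := by
    intro a b hab
    rw [hw, withDensity_apply _ measurableSet_Ioc, hdens_eq,
      setLIntegral_indicator measurableSet_Ioi, Set.inter_comm,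
      Set.Ioc_inter_Ioi, max_comm a T]
    rcases le_or_gt b (max T a) with hb | hb
    · rw [Set.Ioc_eq_empty (not_lt.mpr hb), setLIntegral_empty]
      rcases le_max_iff.mp hb with hbT | hba
      · rw [max_eq_left hbT, max_eq_left (hab.trans hbT), sub_self, ENNReal.ofReal_zero]
      · have : a = b := le_antisymm hab hba
        subst this
        simp
    · have hint : IntegrableOn h (Set.Ioc (max T a) b) volume :=
        hh_cont.integrableOn_Ioc
      rw [← ofReal_integral_eq_lintegral_ofReal hint
        (Filter.Eventually.of_forall fun s => hh_nn s)]
      congr 1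
      rw [← intervalIntegral.integral_of_le hb.le, hFTC _ _ hb.le]
      have hTb : max T b = b := max_eq_right ((le_max_left T a).trans hb.le)
      rw [hTb]
  -- identify the measure
  have hmeq : f.measure = ENNReal.ofReal c • Measure.dirac 0 + w := by
    refine Measure.ext_of_Ioc _ _ (fun a b hab => ?_)
    rw [f.measure_Ioc, Measure.add_apply, hWioc a b hab.le]
    have hdirac : (ENNReal.ofReal c • Measure.dirac (0:ℝ)) (Set.Ioc a b)
        = if (0:ℝ) ∈ Set.Ioc a b then ENNReal.ofReal c else 0 := by
      simp [Measure.dirac_apply' _ measurableSet_Ioc, Set.indicator_apply, mul_comm]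
    rw [hdirac]
    by_cases hb0 : b < 0
    · have ha0 : a < 0 := hab.trans hb0
      rw [if_neg (by simp [Set.mem_Ioc]; intro _; linarith)]
      rw [h1 b hb0, h1 a ha0, max_eq_left (by linarith), max_eq_left (by linarith)]
      simp
    · push_neg at hb0
      by_cases ha0 : a < 0
      · have hmem : (0:ℝ) ∈ Set.Ioc a b := ⟨ha0, hb0⟩
        have haT : a ≤ T := le_of_lt (lt_of_lt_of_le ha0 hT)
        rcases lt_or_ge b T with hbT | hbT
        · rw [if_pos hmem, h1 a ha0, h2 b hb0 hbT, max_eq_left hbT.le,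
            max_eq_left haT]
          simp
        · rw [if_pos hmem, h1 a ha0, h3 b hbT, max_eq_right hbT,
            max_eq_left haT]
          rw [← ENNReal.ofReal_add hc]
          · congr 1; ring
          · have : Real.exp (γ * T) ≤ Real.exp (γ * b) :=
              Real.exp_le_exp.mpr (by nlinarith)
            nlinarith
      · push_neg at ha0
        rw [if_neg (by simp [Set.mem_Ioc]; intro h'; linarith)]
        rcases lt_or_ge b T with hbT | hbT
        · have haT : a < T := hab.trans hbT
          rw [h2 b hb0 hbT, h2 a ha0 haT, max_eq_left hbT.le, max_eq_left haT.le]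
          simp
        · rw [h3 b hbT, max_eq_right hbT]
          rcases lt_or_ge a T with haT | haT
          · rw [h2 a ha0 haT, max_eq_left haT.le]
            simp
          · rw [h3 a haT, max_eq_right haT]
            simp
  -- integrability of integrand against w restricted
  have hint_core : IntegrableOn (fun t => h t * Real.exp (-lam * t)) (Set.Ioi T) volume := by
    have : IntegrableOn (fun t => (A * γ) * Real.exp (-(lam - γ) * t)) (Set.Ioi T) volume :=
      (exp_neg_integrableOn_Ioi T (by linarith)).const_mul (A * γ)
    refine this.congr_fun (fun t _ => ?_) measurableSet_Ioi
    simp only [hh]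
    rw [show (-(lam - γ) * t) = γ * t + -lam * t from by ring, Real.exp_add]
    ring
  have hsmul_eq : (fun t => ((Real.toNNReal ((Set.Ioi T).indicator h t) : ℝ≥0) : ℝ)
        • Real.exp (-lam * t))
      = (Set.Ioi T).indicator (fun t => h t * Real.exp (-lam * t)) := by
    funext t
    by_cases ht : t ∈ Set.Ioi T
    · simp [Set.indicator_of_mem ht, Real.coe_toNNReal _ (hh_nn t), smul_eq_mul]
    · simp [Set.indicator_of_notMem ht]
  have hint_w : Integrable (fun t => Real.exp (-lam * t)) (w.restrict (Set.Ici 0)) := by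
    rw [hw, restrict_withDensity measurableSet_Ici,
      integrable_withDensity_iff_integrable_coe_smul hd_meas]
    have : Integrable ((Set.Ioi T).indicator (fun t => h t * Real.exp (-lam * t)))
        (volume.restrict (Set.Ici 0)) :=
      (hint_core.integrable_indicator measurableSet_Ioi).restrict
    exact this.congr (Filter.Eventually.of_forall fun t => (congrFun hsmul_eq t).symm)
  have hint_d : Integrable (fun t => Real.exp (-lam * t))
      ((ENNReal.ofReal c • Measure.dirac (0:ℝ)).restrict (Set.Ici 0)) := by
    rw [Measure.restrict_smul]
    refine Integrable.smul_measure ?_ ENNReal.ofReal_ne_top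
    have h0 : (0:ℝ) ∈ Set.Ici (0:ℝ) := Set.mem_Ici.mpr (le_refl 0)
    classical
    rw [restrict_dirac' measurableSet_Ici, if_pos h0]
    have hae : (fun t : ℝ => Real.exp (-lam * t)) =ᵐ[Measure.dirac (0:ℝ)]
        fun _ => Real.exp (-lam * 0) := MeasureTheory.ae_eq_dirac _
    exact (integrable_const _).congr hae.symm
  -- compute the integral
  rw [hmeq, Measure.restrict_add, integral_add_measure hint_d hint_w]
  have hIdirac : ∫ t in Set.Ici (0:ℝ), Real.exp (-lam * t)
      ∂(ENNReal.ofReal c • Measure.dirac (0:ℝ)) = c := by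
    rw [Measure.restrict_smul, integral_smul_measure]
    classical
    rw [restrict_dirac' measurableSet_Ici, if_pos (Set.mem_Ici.mpr (le_refl (0:ℝ)))]
    rw [integral_dirac]
    simp [ENNReal.toReal_ofReal hc]
  have hIw : ∫ t in Set.Ici (0:ℝ), Real.exp (-lam * t) ∂w
      = A * γ / (lam - γ) * Real.exp ((γ - lam) * T) := by
    rw [hw, setIntegral_withDensity_eq_setIntegral_smul hd_meas _ measurableSet_Ici]
    simp only [NNReal.smul_def]
    rw [hsmul_eq]
    rw [setIntegral_indicator measurableSet_Ioi]
    have hss : Set.Ici (0:ℝ) ∩ Set.Ioi T = Set.Ioi T :=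
      Set.inter_eq_right.mpr (fun x hx => le_trans hT (le_of_lt hx))
    rw [hss]
    have hcongr : ∀ t : ℝ, h t * Real.exp (-lam * t) = A * γ * Real.exp ((γ - lam) * t) := by
      intro t
      simp only [hh]
      rw [show ((γ - lam) * t) = γ * t + -lam * t from by ring, Real.exp_add]
      ring
    rw [integral_congr_ae (Filter.Eventually.of_forall fun t => hcongr t)]
    have hderiv : ∀ x ∈ Set.Ici T, HasDerivAt
        (fun t => A * γ / (γ - lam) * Real.exp ((γ - lam) * t))
        (A * γ * Real.exp ((γ - lam) * x)) x := by
      intro x _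
      have h1' : HasDerivAt (fun t : ℝ => (γ - lam) * t) (γ - lam) x := by
        simpa using (hasDerivAt_id x).const_mul (γ - lam)
      have h2' := (h1'.exp).const_mul (A * γ / (γ - lam))
      refine h2'.congr_deriv ?_
      have hne : γ - lam ≠ 0 := ne_of_lt (by linarith)
      have hc' : A * γ / (γ - lam) * (γ - lam) = A * γ := div_mul_cancel₀ _ hne
      linear_combination (Real.exp ((γ - lam) * x)) * hc'
    have hint' : IntegrableOn (fun t => A * γ * Real.exp ((γ - lam) * t)) (Set.Ioi T) volume := by
      have : IntegrableOn (fun t => (A * γ) * Real.exp (-(lam - γ) * t)) (Set.Ioi T) volume :=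
        (exp_neg_integrableOn_Ioi T (by linarith)).const_mul (A * γ)
      refine this.congr_fun (fun t _ => ?_) measurableSet_Ioi
      dsimp only
      rw [show (-(lam - γ) * t) = (γ - lam) * t from by ring]
    have htend : Tendsto (fun t => A * γ / (γ - lam) * Real.exp ((γ - lam) * t))
        atTop (𝓝 0) := by
      have hb : Tendsto (fun t : ℝ => (lam - γ) * t) atTop atTop :=
        Tendsto.const_mul_atTop (by linarith) tendsto_id
      have := Real.tendsto_exp_neg_atTop_nhds_zero.comp hb
      have h2' := this.const_mul (A * γ / (γ - lam))
      rw [mul_zero] at h2'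
      refine h2'.congr fun t => ?_
      simp only [Function.comp]
      congr 2
      ring
    rw [MeasureTheory.integral_Ioi_of_hasDerivAt_of_tendsto' hderiv hint' htend]
    rw [zero_sub]
    have hne : γ - lam ≠ 0 := ne_of_lt (by linarith)
    have hne' : lam - γ ≠ 0 := ne_of_gt (by linarith)
    field_simp
    ring
  rw [hIdirac, hIw]

/-- Fix real parameters 0 < α < 1, η ≥ 0, β > 0, r > 0, K > 0 and δ ∈ ℝ with
α·r < δ < r + (1−α)·β. Set ρ := (δ−r)/(α−1) and define
M(t) := max(η, K^{1/(α−1)}·e^{(ρ+β)t}) for t ≥ 0, extended by M(t) := η for t < 0, and let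
μ_M denote the associated Lebesgue–Stieltjes measure (of the Stieltjes function f agreeing
with M) on [0,∞). Then the discounted cost of the tracking consumption plan satisfies:
(1/β)·∫_{[0,∞)} e^{−(r+β)t} dμ_M(t) = K^{1/(α−1)}·(1−α)(β+r)/(β(δ−αr)) − η/β
  if η ≤ K^{1/(α−1)}, and
(1/β)·∫_{[0,∞)} e^{−(r+β)t} dμ_M(t)
  = ((1−α)β + r − δ)/(β(δ−αr)) · η^{(αr−δ)/((1−α)β+r−δ)} · K^{−(r+β)/((1−α)β+r−δ)}
  if η > K^{1/(α−1)}. -/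
theorem stmt_13 (α η β r K δ : ℝ) (hα0 : 0 < α) (hα1 : α < 1) (hη : 0 ≤ η)
    (hβ : 0 < β) (hr : 0 < r) (hK : 0 < K)
    (hδ1 : α * r < δ) (hδ2 : δ < r + (1 - α) * β)
    (ρ : ℝ) (hρ : ρ = (δ - r) / (α - 1))
    (f : StieltjesFunction ℝ)
    (hf : ∀ t : ℝ, f t = if t < 0 then η
        else max η (K ^ ((1 : ℝ) / (α - 1)) * Real.exp ((ρ + β) * t))) :
    (η ≤ K ^ ((1 : ℝ) / (α - 1)) →
      (1 / β) * ∫ t in Set.Ici (0 : ℝ), Real.exp (-(r + β) * t) ∂f.measure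
        = K ^ ((1 : ℝ) / (α - 1)) * ((1 - α) * (β + r)) / (β * (δ - α * r)) - η / β) ∧
    (K ^ ((1 : ℝ) / (α - 1)) < η →
      (1 / β) * ∫ t in Set.Ici (0 : ℝ), Real.exp (-(r + β) * t) ∂f.measure
        = ((1 - α) * β + r - δ) / (β * (δ - α * r)) *
            η ^ ((α * r - δ) / ((1 - α) * β + r - δ)) *
            K ^ (-(r + β) / ((1 - α) * β + r - δ))) := by
  
  have h1α : (0:ℝ) < 1 - α := by linarith
  have hα1' : α - 1 ≠ 0 := ne_of_lt (by linarith)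
  have hδα : (0:ℝ) < δ - α * r := by linarith
  have hD : (0:ℝ) < (1 - α) * β + r - δ := by nlinarith
  set A : ℝ := K ^ ((1:ℝ)/(α-1)) with hAdef
  have hA : 0 < A := Real.rpow_pos_of_pos hK _
  have hAexp : A = Real.exp (Real.log K * (1/(α-1))) := Real.rpow_def_of_pos hK _
  have e2 : ρ + β = ((1 - α) * β + r - δ) / (1 - α) := by
    rw [hρ]; field_simp; ring
  have e1 : (r + β) - (ρ + β) = (δ - α * r) / (1 - α) := by
    rw [hρ]; field_simp; ring
  have e3 : ρ - r = (α * r - δ) / (1 - α) := by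
    rw [hρ]; field_simp; ring
  have hγ : 0 < ρ + β := by rw [e2]; exact div_pos hD h1α
  have hlam : ρ + β < r + β := by
    have := div_pos hδα h1α
    linarith [e1]
  constructor
  · -- case η ≤ A
    intro hle
    have hyp1 : ∀ t : ℝ, t < 0 → f t = A * Real.exp ((ρ + β) * (0:ℝ)) - (A - η) := by
      intro t ht
      rw [hf t, if_pos ht, mul_zero, Real.exp_zero]
      ring
    have hyp2 : ∀ t : ℝ, 0 ≤ t → t < (0:ℝ) → f t = A * Real.exp ((ρ + β) * (0:ℝ)) := by
      intro t h0 h0'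
      exact absurd h0' (not_lt.mpr h0)
    have hyp3 : ∀ t : ℝ, (0:ℝ) ≤ t → f t = A * Real.exp ((ρ + β) * t) := by
      intro t ht
      rw [hf t, if_neg (not_lt.mpr ht)]
      refine max_eq_right (le_trans hle ?_)
      exact le_mul_of_one_le_right hA.le (Real.one_le_exp (mul_nonneg hγ.le ht))
    have key := stmt13_aux A (ρ + β) (r + β) 0 (A - η) hA hγ hlam le_rfl
      (by linarith) f hyp1 hyp2 hyp3
    rw [key, mul_zero, Real.exp_zero, mul_one, e1, e2]
    field_simp
    ring
  · -- case A < η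
    intro hlt2
    have hη' : 0 < η := hA.trans hlt2
    set T : ℝ := Real.log (η / A) / (ρ + β) with hTdef
    have hT : 0 ≤ T :=
      le_of_lt (div_pos (Real.log_pos ((one_lt_div hA).mpr hlt2)) hγ)
    have hmulT : (ρ + β) * T = Real.log (η / A) := by
      rw [hTdef]; field_simp
    have hAT : A * Real.exp ((ρ + β) * T) = η := by
      rw [hmulT, Real.exp_log (div_pos hη' hA)]
      field_simp
    have hyp1 : ∀ t : ℝ, t < 0 → f t = A * Real.exp ((ρ + β) * T) - 0 := by
      intro t ht
      rw [hf t, if_pos ht, hAT]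
      ring
    have hyp2 : ∀ t : ℝ, 0 ≤ t → t < T → f t = A * Real.exp ((ρ + β) * T) := by
      intro t h0 htT
      rw [hf t, if_neg (not_lt.mpr h0), hAT]
      refine max_eq_left ?_
      have hle' : A * Real.exp ((ρ + β) * t) ≤ A * Real.exp ((ρ + β) * T) := by
        have hx := Real.exp_le_exp.mpr
          (mul_le_mul_of_nonneg_left (le_of_lt htT) hγ.le)
        nlinarith
      rw [hAT] at hle'
      exact hle'
    have hyp3 : ∀ t : ℝ, T ≤ t → f t = A * Real.exp ((ρ + β) * t) := by
      intro t ht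
      rw [hf t, if_neg (not_lt.mpr (le_trans hT ht))]
      refine max_eq_right ?_
      have hle' : A * Real.exp ((ρ + β) * T) ≤ A * Real.exp ((ρ + β) * t) := by
        have hx := Real.exp_le_exp.mpr
          (mul_le_mul_of_nonneg_left ht hγ.le)
        nlinarith
      rw [hAT] at hle'
      exact hle'
    have key := stmt13_aux A (ρ + β) (r + β) T 0 hA hγ hlam hT le_rfl f hyp1 hyp2 hyp3
    rw [key, zero_add]
    have hTeq : T = (Real.log η - 1/(α-1) * Real.log K) / (ρ + β) := by
      rw [hTdef, Real.log_div hη'.ne' hA.ne', hAdef, Real.log_rpow hK]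
    have hAe : A * Real.exp (((ρ + β) - (r + β)) * T)
        = η ^ ((α * r - δ) / ((1 - α) * β + r - δ))
          * K ^ (-(r + β) / ((1 - α) * β + r - δ)) := by
      rw [Real.rpow_def_of_pos hη', Real.rpow_def_of_pos hK, hAexp,
        ← Real.exp_add, ← Real.exp_add]
      congr 1
      rw [hTeq, show (ρ + β) - (r + β) = ρ - r from by ring, e3, e2]
      field_simp
      ring
    rw [show A * (ρ + β) / (r + β - (ρ + β)) * Real.exp ((ρ + β - (r + β)) * T)
        = (ρ + β) / ((r + β) - (ρ + β)) * (A * Real.exp (((ρ + β) - (r + β)) * T))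
        from by ring]
    rw [hAe, e1, e2]
    field_simp
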